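/- Let C and C' be linear codes in F_q^n with dim(C)=k and dim(C')=k', and suppose that the componentwise product code C*C' (the linear span of all coordinatewise products c*c' for c in C, c' in C') is nonzero. Then the minimum distance of C*C' satisfies dmin(C*C') ≤ max(1, n - k - k' + 2). -/

import Mathlib

noncomputable section

/-- The componentwise product code of two linear codes. -/
def prodCode (F : Type*) [Field F] {n : ℕ}
    (C C' : Submodule F (Fin n → F)) : Submodule F (Fin n → F) :=
  Submodule.span F {z | ∃ c ∈ C, ∃ c' ∈ C', z = c * c'}

/-- The t-fold componentwise power of a code (convention: 0th power is ⊤). -/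
def powCode (F : Type*) [Field F] {n : ℕ} (C : Submodule F (Fin n → F)) :
    ℕ → Submodule F (Fin n → F)
  | 0 => ⊤
  | 1 => C
  | (t+2) => prodCode F (powCode F C (t+1)) C

/-- Minimum distance: minimum Hamming weight of a nonzero codeword. -/
def dmin {F : Type*} [Field F] [DecidableEq F] {n : ℕ}
    (C : Submodule F (Fin n → F)) : ℕ :=
  sInf {w | ∃ c ∈ C, c ≠ 0 ∧ hammingNorm c = w}

/-- The dual code with respect to the standard bilinear form. -/
def dualCode (F : Type*) [Field F] {n : ℕ}
    (C : Submodule F (Fin n → F)) : Submodule F (Fin n → F) where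
  carrier := {x | ∀ c ∈ C, ∑ i, x i * c i = 0}
  zero_mem' := by intro c hc; simp
  add_mem' := by
    intro a b ha hb c hc
    have h : ∑ i, (a + b) i * c i = (∑ i, a i * c i) + ∑ i, b i * c i := by
      simp [add_mul, Finset.sum_add_distrib]
    simp only [Set.mem_setOf_eq] at *
    rw [h, ha c hc, hb c hc, add_zero]
  smul_mem' := by
    intro r a ha c hc
    simp only [Pi.smul_apply, smul_eq_mul, mul_assoc, ← Finset.mul_sum, Set.mem_setOf_eq] at *
    rw [ha c hc, mul_zero]

/-- A code has full support if every coordinate carries a nonzero codeword value. -/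
def fullSupport (F : Type*) [Field F] {n : ℕ} (C : Submodule F (Fin n → F)) : Prop :=
  ∀ j, ∃ c ∈ C, c j ≠ 0

/-- Product code of a family of codes. -/
def prodFamily (F : Type*) [Field F] {n t : ℕ}
    (C : Fin t → Submodule F (Fin n → F)) : Submodule F (Fin n → F) :=
  Submodule.span F {z | ∃ c : Fin t → (Fin n → F), (∀ i, c i ∈ C i) ∧ z = ∏ i, c i}



noncomputable section
open Submodule Module
variable {F : Type*} [Field F] {n : ℕ}

def sIn (F : Type*) [Field F] {n : ℕ} (T : Finset (Fin n)) : Submodule F (Fin n → F) where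
  carrier := {x | ∀ i ∉ T, x i = 0}
  zero_mem' := by intro i _; rfl
  add_mem' := by intro a b ha hb i hi; simp [ha i hi, hb i hi]
  smul_mem' := by intro c a ha i hi; simp [ha i hi]

lemma mem_sIn {T : Finset (Fin n)} {x : Fin n → F} : x ∈ sIn F T ↔ ∀ i ∉ T, x i = 0 :=
  Iff.rfl

lemma hammingNorm_le_card [DecidableEq F] {T : Finset (Fin n)} {x : Fin n → F}
    (h : ∀ i ∉ T, x i = 0) : hammingNorm x ≤ T.card := by
  apply Finset.card_le_card
  intro i hi
  simp only [hammingNorm, Finset.mem_filter, Finset.mem_univ] at hi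
  by_contra hiT
  exact hi.2 (h i hiT)

def resMap (F : Type*) [Field F] {n : ℕ} (T : Finset (Fin n)) :
    (Fin n → F) →ₗ[F] (T → F) :=
  LinearMap.funLeft F F (fun i => (i : Fin n))

lemma finrank_le_card_of_le_sIn {T : Finset (Fin n)} {C : Submodule F (Fin n → F)}
    (h : C ≤ sIn F T) : finrank F C ≤ T.card := by
  have hinj : Function.Injective ((resMap F T).comp C.subtype) := by
    rw [← LinearMap.ker_eq_bot]
    ext x
    simp only [LinearMap.mem_ker, Submodule.mem_bot]
    constructor
    · intro hx
      ext1
      funext i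
      by_cases hi : i ∈ T
      · have := congrFun hx ⟨i, hi⟩
        simpa [resMap, LinearMap.funLeft] using this
      · exact h x.2 i hi
    · rintro rfl; simp
  have := LinearMap.finrank_le_finrank_of_injective hinj
  simpa [Module.finrank_pi] using this

/-- Singleton-type bound. -/
lemma exists_low_weight [DecidableEq F] {T : Finset (Fin n)} {C : Submodule F (Fin n → F)}
    (hC : C ≤ sIn F T) (hne : C ≠ ⊥) :
    ∃ z ∈ C, z ≠ 0 ∧ hammingNorm z + finrank F C ≤ T.card + 1 := by
  set r := finrank F C with hr
  have hrpos : 0 < r := by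
    rw [hr]
    by_contra h
    push_neg at h
    exact hne (Submodule.finrank_eq_zero.mp (Nat.le_zero.mp h))
  have hrT : r ≤ T.card := finrank_le_card_of_le_sIn hC
  obtain ⟨T₀, hT₀T, hT₀card⟩ := Finset.exists_subset_card_eq (s := T) (n := r - 1) (le_trans (Nat.sub_le _ _) hrT)
  -- the restriction map to T₀ is not injective on C
  have : ∃ x : C, x ≠ 0 ∧ (resMap F T₀).comp C.subtype x = 0 := by
    by_contra h
    push_neg at h
    have hinj : Function.Injective ((resMap F T₀).comp C.subtype) := by
      rw [← LinearMap.ker_eq_bot, Submodule.eq_bot_iff]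
      intro x hx
      by_contra hx0
      exact (h x hx0) hx
    have := LinearMap.finrank_le_finrank_of_injective hinj
    rw [Module.finrank_pi, Fintype.card_coe, hT₀card, ← hr] at this
    omega
  obtain ⟨x, hx0, hxres⟩ := this
  refine ⟨x.1, x.2, ?_, ?_⟩
  · simpa [Submodule.coe_eq_zero] using hx0
  · have hsupp : ∀ i ∉ T \ T₀, (x : Fin n → F) i = 0 := by
      intro i hi
      simp only [Finset.mem_sdiff, not_and, not_not] at hi
      by_cases hiT : i ∈ T
      · have hiT₀ : i ∈ T₀ := hi hiT
        have := congrFun hxres ⟨i, hiT₀⟩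
        simpa [resMap, LinearMap.funLeft] using this
      · exact hC x.2 i hiT
    have h1 : hammingNorm (x : Fin n → F) ≤ (T \ T₀).card := hammingNorm_le_card hsupp
    have h2 : (T \ T₀).card = T.card - (r - 1) := by rw [Finset.card_sdiff_of_subset hT₀T, hT₀card]
    omega

end

noncomputable section
open Submodule Module
variable {F : Type*} [Field F] {n : ℕ}


lemma mul_mem_prodCode {C C' : Submodule F (Fin n → F)} {c c' : Fin n → F}
    (hc : c ∈ C) (hc' : c' ∈ C') : c * c' ∈ prodCode F C C' :=
  Submodule.subset_span ⟨c, hc, c', hc', rfl⟩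

lemma prodCode_le {C C' E : Submodule F (Fin n → F)}
    (h : ∀ c ∈ C, ∀ c' ∈ C', c * c' ∈ E) : prodCode F C C' ≤ E := by
  rw [prodCode, Submodule.span_le]
  rintro z ⟨c, hc, c', hc', rfl⟩
  exact h c hc c' hc'

lemma prodCode_le_sIn_right {T : Finset (Fin n)} {C C' : Submodule F (Fin n → F)}
    (h : C' ≤ sIn F T) : prodCode F C C' ≤ sIn F T := by
  refine prodCode_le fun c _ c' hc' => ?_
  intro i hi
  simp [Pi.mul_apply, h hc' i hi]

lemma prodCode_mono_right {C C' C'' : Submodule F (Fin n → F)} (h : C'' ≤ C') :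
    prodCode F C C'' ≤ prodCode F C C' :=
  prodCode_le fun c hc c' hc' => mul_mem_prodCode hc (h hc')

/-- Coordinate projection onto a finset, as a linear endomap. -/
def projM (F : Type*) [Field F] {n : ℕ} (U : Finset (Fin n)) :
    (Fin n → F) →ₗ[F] (Fin n → F) where
  toFun x := fun i => if i ∈ U then x i else 0
  map_add' x y := by funext i; by_cases hi : i ∈ U <;> simp [hi]
  map_smul' c x := by funext i; by_cases hi : i ∈ U <;> simp [hi]

lemma projM_apply {U : Finset (Fin n)} (x : Fin n → F) (i : Fin n) :
    projM F U x i = if i ∈ U then x i else 0 := rfl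

lemma projM_mem_sIn {U : Finset (Fin n)} (x : Fin n → F) : projM F U x ∈ sIn F U := by
  intro i hi; simp [projM_apply, hi]

lemma projM_eq_self {U : Finset (Fin n)} {x : Fin n → F} (h : x ∈ sIn F U) :
    projM F U x = x := by
  funext i
  rw [projM_apply]
  by_cases hi : i ∈ U
  · simp [hi]
  · simp [hi, h i hi]

lemma map_projM_le_sIn {U : Finset (Fin n)} (C : Submodule F (Fin n → F)) :
    Submodule.map (projM F U) C ≤ sIn F U := by
  rintro x ⟨y, _, rfl⟩
  exact projM_mem_sIn y

lemma projM_mul_of_right_mem {U : Finset (Fin n)} (x : Fin n → F) {y : Fin n → F}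
    (h : y ∈ sIn F U) : projM F U x * y = x * y := by
  funext i
  by_cases hi : i ∈ U
  · simp [projM_apply, hi]
  · simp [projM_apply, hi, h i hi]

/-- Projecting the left factor doesn't change the product code when the right
factor is supported in `U`. -/
lemma prodCode_map_projM_left {U : Finset (Fin n)} {C C' : Submodule F (Fin n → F)}
    (h : C' ≤ sIn F U) :
    prodCode F (Submodule.map (projM F U) C) C' = prodCode F C C' := by
  apply le_antisymm
  · refine prodCode_le ?_
    rintro c ⟨c₀, hc₀, rfl⟩ c' hc'
    rw [projM_mul_of_right_mem c₀ (h hc')]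
    exact mul_mem_prodCode hc₀ hc'
  · refine prodCode_le fun c hc c' hc' => ?_
    rw [← projM_mul_of_right_mem c (h hc')]
    exact mul_mem_prodCode ⟨c, hc, rfl⟩ hc'

/-- Projecting both factors doesn't change the product code when the product code
is supported in `U`. -/
lemma prodCode_map_projM_both {U : Finset (Fin n)} {C C' : Submodule F (Fin n → F)}
    (h : prodCode F C C' ≤ sIn F U) :
    prodCode F (Submodule.map (projM F U) C) (Submodule.map (projM F U) C') =
      prodCode F C C' := by
  have key : ∀ c ∈ C, ∀ c' ∈ C', projM F U c * projM F U c' = c * c' := by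
    intro c hc c' hc'
    have hcc' : c * c' ∈ sIn F U := h (mul_mem_prodCode hc hc')
    funext i
    by_cases hi : i ∈ U
    · simp [projM_apply, hi]
    · simp [projM_apply, hi, hcc' i hi]
  apply le_antisymm
  · refine prodCode_le ?_
    rintro c ⟨c₀, hc₀, rfl⟩ c' ⟨c₀', hc₀', rfl⟩
    rw [key c₀ hc₀ c₀' hc₀']
    exact mul_mem_prodCode hc₀ hc₀'
  · refine prodCode_le fun c hc c' hc' => ?_
    rw [← key c hc c' hc']
    exact mul_mem_prodCode ⟨c, hc, rfl⟩ ⟨c', hc', rfl⟩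

/-- Rank inequality: `finrank C ≤ finrank (f '' C) + finrank K` whenever `K` contains
the kernel of `f` on `C`. -/
lemma finrank_le_map_add {M : Type*} [AddCommGroup M] [Module F M] [FiniteDimensional F M]
    (f : (Fin n → F) →ₗ[F] M) (C K : Submodule F (Fin n → F))
    (hK : ∀ x ∈ C, f x = 0 → x ∈ K) :
    finrank F C ≤ finrank F (Submodule.map f C) + finrank F K := by
  have h1 := LinearMap.finrank_range_add_finrank_ker (f.comp C.subtype)
  have h2 : LinearMap.range (f.comp C.subtype) = Submodule.map f C := by
    rw [LinearMap.range_comp, Submodule.range_subtype]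
  have h3 : finrank F (LinearMap.ker (f.comp C.subtype)) ≤ finrank F K := by
    have hmap : Submodule.map C.subtype (LinearMap.ker (f.comp C.subtype)) ≤ K := by
      rintro x ⟨y, hy, rfl⟩
      exact hK y.1 y.2 hy
    calc finrank F (LinearMap.ker (f.comp C.subtype))
        = finrank F (Submodule.map C.subtype (LinearMap.ker (f.comp C.subtype))) :=
          (Submodule.finrank_map_subtype_eq C _).symm
      _ ≤ finrank F K := Submodule.finrank_mono hmap
  rw [h2] at h1
  omega

lemma hammingNorm_single [DecidableEq F] {z : Fin n → F} {j : Fin n}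
    (hj : z j ≠ 0) (h : ∀ i, i ≠ j → z i = 0) : hammingNorm z = 1 := by
  have : ({i | z i ≠ 0} : Finset (Fin n)) = {j} := by
    ext i
    simp only [Finset.mem_filter, Finset.mem_univ, true_and, Finset.mem_singleton,
      Set.mem_setOf_eq]
    constructor
    · intro hi
      by_contra hij
      exact hi (h i hij)
    · rintro rfl; exact hj
  simp [hammingNorm, this]

end

noncomputable section
open Submodule Module
variable {F : Type*} [Field F] {n : ℕ}

lemma main_induction [DecidableEq F] :
    ∀ (N : ℕ) (T : Finset (Fin n)) (C C' : Submodule F (Fin n → F)),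
      T.card ≤ N → C ≤ sIn F T → C' ≤ sIn F T → prodCode F C C' ≠ ⊥ →
      ∃ z ∈ prodCode F C C', z ≠ 0 ∧
        (hammingNorm z : ℤ) ≤
          max 1 ((T.card : ℤ) - finrank F C - finrank F C' + 2) := by
  intro N
  induction N with
  | zero =>
    intro T C C' hcard hCT hC'T hne
    exfalso
    obtain ⟨z, hzD, hzne⟩ := Submodule.exists_mem_ne_zero_of_ne_bot hne
    apply hzne
    funext i
    exact prodCode_le_sIn_right hC'T hzD i (by simp [Finset.card_eq_zero.mp (Nat.le_zero.mp hcard)])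
  | succ N IH =>
    intro T C C' hcard hCT hC'T hne
    classical
    set D := prodCode F C C' with hD
    by_cases hfull : ∀ i ∈ T, ∃ z ∈ D, z i ≠ 0
    · -- D has full support on T
      have hCfull : ∀ i ∈ T, ∃ c ∈ C, c i ≠ 0 := by
        intro i hi
        obtain ⟨z, hzD, hzi⟩ := hfull i hi
        by_contra h
        push_neg at h
        have hle : D ≤ LinearMap.ker (LinearMap.proj i) :=
          prodCode_le fun c hc c' _ => by
            simp [LinearMap.mem_ker, h c hc]
        exact hzi (hle hzD)
      have hC'full : ∀ i ∈ T, ∃ c' ∈ C', c' i ≠ 0 := by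
        intro i hi
        obtain ⟨z, hzD, hzi⟩ := hfull i hi
        by_contra h
        push_neg at h
        have hle : D ≤ LinearMap.ker (LinearMap.proj i) :=
          prodCode_le fun c _ c' hc' => by
            simp [LinearMap.mem_ker, h c' hc']
        exact hzi (hle hzD)
      have hC'ne : C' ≠ ⊥ := by
        rintro rfl
        apply hne
        rw [hD, eq_bot_iff]
        exact prodCode_le fun c _ c' hc' => by
          simp only [Submodule.mem_bot] at hc' ⊢
          simp [hc']
      by_cases hk' : finrank F C' ≤ 1
      · -- dim C' = 1
        have hk'1 : finrank F C' = 1 := by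
          have : 0 < finrank F C' := by
            by_contra h
            push_neg at h
            exact hC'ne (Submodule.finrank_eq_zero.mp (Nat.le_zero.mp h))
          omega
        obtain ⟨c'₀, hc'₀C', hc'₀ne⟩ := Submodule.exists_mem_ne_zero_of_ne_bot hC'ne
        have hspan : Submodule.span F {c'₀} = C' := by
          apply Submodule.eq_of_le_of_finrank_le
          · rw [Submodule.span_le, Set.singleton_subset_iff]; exact hc'₀C'
          · rw [hk'1, finrank_span_singleton hc'₀ne]
        have hc'₀full : ∀ i ∈ T, c'₀ i ≠ 0 := by
          intro i hi
          obtain ⟨c', hc', hci⟩ := hC'full i hi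
          rw [← hspan] at hc'
          obtain ⟨a, rfl⟩ := Submodule.mem_span_singleton.mp hc'
          intro h0
          apply hci
          simp [h0]
        have hkD : finrank F C ≤ finrank F D := by
          have h1 := finrank_le_map_add (LinearMap.mulLeft F c'₀) C ⊥ ?_
          · have h2 : Submodule.map (LinearMap.mulLeft F c'₀) C ≤ D := by
              rintro x ⟨c, hc, rfl⟩
              have : LinearMap.mulLeft F c'₀ c = c * c'₀ := by
                simp [LinearMap.mulLeft_apply, mul_comm]
              rw [this]
              exact mul_mem_prodCode hc hc'₀C'
            have h3 := Submodule.finrank_mono h2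
            simp only [finrank_bot, add_zero] at h1
            omega
          · intro x hx hx0
            simp only [Submodule.mem_bot]
            funext i
            by_cases hi : i ∈ T
            · have := congrFun hx0 i
              simp only [LinearMap.mulLeft_apply, Pi.mul_apply, Pi.zero_apply] at this
              exact (mul_eq_zero.mp this).resolve_left (hc'₀full i hi)
            · exact hCT hx i hi
        obtain ⟨z, hzD, hzne, hzw⟩ :=
          exists_low_weight (prodCode_le_sIn_right hC'T) hne
        refine ⟨z, hzD, hzne, ?_⟩
        refine le_trans ?_ (le_max_right _ _)
        rw [hk'1]
        have hDeq : finrank F (prodCode F C C') = finrank F D := rfl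
        omega
      · -- dim C' ≥ 2
        push_neg at hk'
        obtain ⟨z₀, hz₀D, hz₀ne⟩ := Submodule.exists_mem_ne_zero_of_ne_bot hne
        obtain ⟨j, hz₀j⟩ := Function.ne_iff.mp hz₀ne
        have hjT : j ∈ T := by
          by_contra h
          exact hz₀j (prodCode_le_sIn_right hC'T hz₀D j h)
        set C'' := C' ⊓ LinearMap.ker (LinearMap.proj (R := F) (φ := fun _ : Fin n => F) j)
          with hC''def
        have hC''C' : C'' ≤ C' := inf_le_left
        have hC''T : C'' ≤ sIn F T := le_trans hC''C' hC'T
        have hC''j : ∀ b ∈ C'', b j = 0 := fun b hb => hb.2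
        have hk'' : finrank F C' ≤ finrank F C'' + 1 := by
          have h1 := finrank_le_map_add (LinearMap.proj (R := F)
            (φ := fun _ : Fin n => F) j) C' C'' (fun x hx hx0 => ⟨hx, hx0⟩)
          have h2 : finrank F (Submodule.map (LinearMap.proj (R := F)
              (φ := fun _ : Fin n => F) j) C') ≤ 1 := by
            have := Submodule.finrank_le (Submodule.map (LinearMap.proj (R := F)
              (φ := fun _ : Fin n => F) j) C')
            simpa using this
          omega
        have hC''ne : C'' ≠ ⊥ := by
          intro h
          rw [h, finrank_bot] at hk''
          omega
        set D₁ := prodCode F C C'' with hD₁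
        have hD₁D : D₁ ≤ D := prodCode_mono_right hC''C'
        have hD₁ne : D₁ ≠ ⊥ := by
          obtain ⟨b, hbC'', hbne⟩ := Submodule.exists_mem_ne_zero_of_ne_bot hC''ne
          obtain ⟨i₀, hbi₀⟩ := Function.ne_iff.mp hbne
          have hi₀T : i₀ ∈ T := by
            by_contra h
            exact hbi₀ (hC''T hbC'' i₀ h)
          obtain ⟨c, hcC, hci₀⟩ := hCfull i₀ hi₀T
          intro hbot
          have : c * b ∈ (⊥ : Submodule F (Fin n → F)) := hbot ▸ mul_mem_prodCode hcC hbC''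
          rw [Submodule.mem_bot] at this
          have := congrFun this i₀
          simp only [Pi.mul_apply, Pi.zero_apply] at this
          exact (mul_eq_zero.mp this).elim hci₀ hbi₀
        have hD₁j : ∀ z ∈ D₁, z j = 0 := by
          intro z hz
          have hle : D₁ ≤ LinearMap.ker (LinearMap.proj (R := F)
              (φ := fun _ : Fin n => F) j) :=
            prodCode_le fun c _ b hb => by
              simp [LinearMap.mem_ker, hC''j b hb]
          exact hle hz
        have hD₁T : D₁ ≤ sIn F T := prodCode_le_sIn_right hC''T
        by_cases hP : ∃ a ∈ C, a j ≠ 0 ∧ ∀ b ∈ C'', a * b = 0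
        · obtain ⟨a, haC, haj, hab⟩ := hP
          by_cases hδ : Pi.single j (1 : F) ∈ C
          · -- weight-one codeword
            obtain ⟨c'₀, hc'₀, hc'₀j⟩ := hC'full j hjT
            refine ⟨Pi.single j 1 * c'₀, mul_mem_prodCode hδ hc'₀, ?_, ?_⟩
            · intro h
              apply hc'₀j
              have := congrFun h j
              simpa using this
            · have hw : hammingNorm (Pi.single j (1:F) * c'₀) = 1 := by
                apply hammingNorm_single (j := j)
                · simpa using hc'₀j
                · intro i hij
                  simp [Pi.single_eq_of_ne hij]
              rw [hw]
              exact le_max_left _ _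
          · -- recurse on T \ supp a
            set S := ({i | a i ≠ 0} : Finset (Fin n)) with hS
            have hjS : j ∈ S := by simp [hS, haj]
            have hST : S ⊆ T := by
              intro i hi
              simp only [hS, Finset.mem_filter, Finset.mem_univ, true_and] at hi
              by_contra h
              exact hi (hCT haC i h)
            set U := T \ S with hU
            have hC''U : C'' ≤ sIn F U := by
              intro b hb i hi
              simp only [hU, Finset.mem_sdiff, not_and, not_not] at hi
              by_cases hiT : i ∈ T
              · have hai : a i ≠ 0 := by
                  have := hi hiT
                  simp only [hS, Finset.mem_filter, Finset.mem_univ, true_and] at this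
                  exact this
                have := congrFun (hab b hb) i
                simp only [Pi.mul_apply, Pi.zero_apply] at this
                exact (mul_eq_zero.mp this).resolve_left hai
              · exact hC''T hb i hiT
            set C₂ := Submodule.map (projM F U) C with hC₂
            have hprod : prodCode F C₂ C'' = D₁ := prodCode_map_projM_left hC''U
            have hUcard : U.card + S.card = T.card := Finset.card_sdiff_add_card_eq_card hST
            have hScard : 1 ≤ S.card := Finset.card_pos.mpr ⟨j, hjS⟩
            obtain ⟨z, hzmem, hzne, hzw⟩ := IH U C₂ C'' (by omega) (map_projM_le_sIn C) hC''U
              (by rw [hprod]; exact hD₁ne)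
            rw [hprod] at hzmem
            refine ⟨z, hD₁D hzmem, hzne, ?_⟩
            refine le_trans hzw (max_le_max le_rfl ?_)
            set A := C ⊓ sIn F S with hA
            have hkA : finrank F C ≤ finrank F C₂ + finrank F A := by
              apply finrank_le_map_add
              intro x hx hx0
              refine ⟨hx, ?_⟩
              intro i hiS
              by_cases hiT : i ∈ T
              · have hiU : i ∈ U := Finset.mem_sdiff.mpr ⟨hiT, hiS⟩
                have := congrFun hx0 i
                simpa [projM_apply, hiU] using this
              · exact hCT hx i hiT
            have hAS : finrank F A + 1 ≤ S.card := by
              have hδA : Pi.single j (1:F) ∉ A := fun h => hδ h.1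
              have hsingle : Pi.single j (1:F) ∈ sIn F S := by
                intro i hi
                have hij : i ≠ j := fun h => hi (h ▸ hjS)
                simp [Pi.single_eq_of_ne hij]
              have hAW : A < A ⊔ Submodule.span F {Pi.single j (1:F)} := by
                refine lt_of_le_of_ne le_sup_left fun h => hδA ?_
                rw [h]
                exact Submodule.mem_sup_right (Submodule.mem_span_singleton_self _)
              have h1 := Submodule.finrank_lt_finrank_of_lt hAW
              have h2 : A ⊔ Submodule.span F {Pi.single j (1:F)} ≤ sIn F S :=
                sup_le inf_le_right
                  (by rw [Submodule.span_le, Set.singleton_subset_iff]; exact hsingle)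
              have h3 := finrank_le_card_of_le_sIn h2
              omega
            omega
        · -- main recursion on the support of D₁
          set T₁ := ({i | ∃ z ∈ D₁, z i ≠ 0} : Finset (Fin n)) with hT₁
          have hmemT₁ : ∀ i, i ∈ T₁ ↔ ∃ z ∈ D₁, z i ≠ 0 := by
            intro i; simp [hT₁]
          have hD₁T₁ : D₁ ≤ sIn F T₁ := by
            intro z hz i hi
            rw [hmemT₁ i] at hi
            push_neg at hi
            exact hi z hz
          have hT₁T : T₁ ⊆ T := by
            intro i hi
            rw [hmemT₁ i] at hi
            obtain ⟨z, hz, hzi⟩ := hi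
            by_contra h
            exact hzi (hD₁T hz i h)
          have hjT₁ : j ∉ T₁ := by
            rw [hmemT₁ j]
            push_neg
            exact hD₁j
          set C₃ := Submodule.map (projM F T₁) C with hC₃
          set C₃'' := Submodule.map (projM F T₁) C'' with hC₃''
          have hprod : prodCode F C₃ C₃'' = D₁ := prodCode_map_projM_both hD₁T₁
          have hT₁card : T₁.card < T.card :=
            Finset.card_lt_card ((Finset.ssubset_iff_of_subset hT₁T).mpr ⟨j, hjT, hjT₁⟩)
          obtain ⟨z, hzmem, hzne, hzw⟩ := IH T₁ C₃ C₃'' (by omega) (map_projM_le_sIn C)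
            (map_projM_le_sIn C'') (by rw [hprod]; exact hD₁ne)
          rw [hprod] at hzmem
          refine ⟨z, hD₁D hzmem, hzne, ?_⟩
          refine le_trans hzw (max_le_max le_rfl ?_)
          set A := C ⊓ sIn F (T \ T₁) with hA
          set B := C'' ⊓ sIn F (T \ T₁) with hB
          have hkA : finrank F C ≤ finrank F C₃ + finrank F A := by
            apply finrank_le_map_add
            intro x hx hx0
            refine ⟨hx, ?_⟩
            intro i hi
            by_cases hiT : i ∈ T
            · have hiT₁ : i ∈ T₁ := by
                simp only [Finset.mem_sdiff, not_and, not_not] at hi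
                exact hi hiT
              have := congrFun hx0 i
              simpa [projM_apply, hiT₁] using this
            · exact hCT hx i hiT
          have hkB : finrank F C'' ≤ finrank F C₃'' + finrank F B := by
            apply finrank_le_map_add
            intro x hx hx0
            refine ⟨hx, ?_⟩
            intro i hi
            by_cases hiT : i ∈ T
            · have hiT₁ : i ∈ T₁ := by
                simp only [Finset.mem_sdiff, not_and, not_not] at hi
                exact hi hiT
              have := congrFun hx0 i
              simpa [projM_apply, hiT₁] using this
            · exact hC''T hx i hiT
          set SA := ({i | ∃ a ∈ A, a i ≠ 0} : Finset (Fin n)) with hSA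
          set SB := ({i | ∃ b ∈ B, b i ≠ 0} : Finset (Fin n)) with hSB
          have hAle : A ≤ sIn F SA := by
            intro x hx i hi
            by_contra hxi
            exact hi (by
              simp only [hSA, Finset.mem_filter, Finset.mem_univ, true_and]
              exact ⟨x, hx, hxi⟩)
          have hBle : B ≤ sIn F SB := by
            intro x hx i hi
            by_contra hxi
            exact hi (by
              simp only [hSB, Finset.mem_filter, Finset.mem_univ, true_and]
              exact ⟨x, hx, hxi⟩)
          have hASA : finrank F A ≤ SA.card := finrank_le_card_of_le_sIn hAle
          have hBSB : finrank F B ≤ SB.card := finrank_le_card_of_le_sIn hBle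
          have hSAsub : SA ⊆ (T \ T₁).erase j := by
            intro i hi
            simp only [hSA, Finset.mem_filter, Finset.mem_univ, true_and] at hi
            obtain ⟨a, haA, hai⟩ := hi
            have hiTT₁ : i ∈ T \ T₁ := by
              by_contra h
              exact hai (haA.2 i h)
            refine Finset.mem_erase.mpr ⟨?_, hiTT₁⟩
            rintro rfl
            apply hP
            refine ⟨a, haA.1, hai, ?_⟩
            intro b hb
            funext i'
            by_cases hi' : i' ∈ T₁
            · have h0 : a i' = 0 := haA.2 i' (by simp [Finset.mem_sdiff, hi'])
              simp [h0]
            · have hmem : (a * b) ∈ D₁ := mul_mem_prodCode haA.1 hb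
              simpa using hD₁T₁ hmem i' hi'
          have hSBsub : SB ⊆ (T \ T₁).erase j := by
            intro i hi
            simp only [hSB, Finset.mem_filter, Finset.mem_univ, true_and] at hi
            obtain ⟨b, hbB, hbi⟩ := hi
            have hiTT₁ : i ∈ T \ T₁ := by
              by_contra h
              exact hbi (hbB.2 i h)
            refine Finset.mem_erase.mpr ⟨?_, hiTT₁⟩
            rintro rfl
            exact hbi (hC''j b hbB.1)
          have hdisj : Disjoint SA SB := by
            rw [Finset.disjoint_left]
            intro i hiA hiB
            simp only [hSA, Finset.mem_filter, Finset.mem_univ, true_and] at hiA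
            simp only [hSB, Finset.mem_filter, Finset.mem_univ, true_and] at hiB
            obtain ⟨a, haA, hai⟩ := hiA
            obtain ⟨b, hbB, hbi⟩ := hiB
            have hab : a * b ∈ D₁ := mul_mem_prodCode haA.1 hbB.1
            have hiT₁ : i ∉ T₁ := by
              have hiTT₁ : i ∈ T \ T₁ := by
                by_contra h
                exact hai (haA.2 i h)
              exact (Finset.mem_sdiff.mp hiTT₁).2
            have h0 := hD₁T₁ hab i hiT₁
            simp only [Pi.mul_apply] at h0
            exact (mul_eq_zero.mp h0).elim hai hbi
          have hcard1 : SA.card + SB.card ≤ ((T \ T₁).erase j).card := by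
            rw [← Finset.card_union_of_disjoint hdisj]
            exact Finset.card_le_card (Finset.union_subset hSAsub hSBsub)
          have hjTT₁ : j ∈ T \ T₁ := Finset.mem_sdiff.mpr ⟨hjT, hjT₁⟩
          have hcard2 : ((T \ T₁).erase j).card + 1 = (T \ T₁).card :=
            Finset.card_erase_add_one hjTT₁
          have hcard3 : (T \ T₁).card + T₁.card = T.card :=
            Finset.card_sdiff_add_card_eq_card hT₁T
          omega
    · -- D does not have full support on T: drop a dead coordinate
      push_neg at hfull
      obtain ⟨j, hjT, hj⟩ := hfull
      set U := T.erase j with hU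
      have hDU : D ≤ sIn F U := by
        intro z hz i hi
        rw [hU, Finset.mem_erase] at hi
        push_neg at hi
        by_cases hij : i = j
        · subst hij; exact hj z hz
        · exact prodCode_le_sIn_right hC'T hz i (hi hij)
      set C₂ := Submodule.map (projM F U) C with hC₂
      set C₂' := Submodule.map (projM F U) C' with hC₂'
      have hprod : prodCode F C₂ C₂' = D := prodCode_map_projM_both hDU
      have hUcard : U.card + 1 = T.card := Finset.card_erase_add_one hjT
      obtain ⟨z, hzmem, hzne, hzw⟩ := IH U C₂ C₂' (by omega) (map_projM_le_sIn C)
        (map_projM_le_sIn C') (by rw [hprod]; exact hne)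
      rw [hprod] at hzmem
      refine ⟨z, hzmem, hzne, ?_⟩
      refine le_trans hzw (max_le_max le_rfl ?_)
      set K := C ⊓ sIn F {j} with hK
      set K' := C' ⊓ sIn F {j} with hK'
      have hkK : finrank F C ≤ finrank F C₂ + finrank F K := by
        apply finrank_le_map_add
        intro x hx hx0
        refine ⟨hx, ?_⟩
        intro i hi
        rw [Finset.mem_singleton] at hi
        by_cases hiT : i ∈ T
        · have hiU : i ∈ U := Finset.mem_erase.mpr ⟨hi, hiT⟩
          have := congrFun hx0 i
          simpa [projM_apply, hiU] using this
        · exact hCT hx i hiT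
      have hkK' : finrank F C' ≤ finrank F C₂' + finrank F K' := by
        apply finrank_le_map_add
        intro x hx hx0
        refine ⟨hx, ?_⟩
        intro i hi
        rw [Finset.mem_singleton] at hi
        by_cases hiT : i ∈ T
        · have hiU : i ∈ U := Finset.mem_erase.mpr ⟨hi, hiT⟩
          have := congrFun hx0 i
          simpa [projM_apply, hiU] using this
        · exact hC'T hx i hiT
      have hKcard : finrank F K ≤ 1 := by
        have := finrank_le_card_of_le_sIn (inf_le_right : K ≤ sIn F {j})
        simpa using this
      have hK'card : finrank F K' ≤ 1 := by
        have := finrank_le_card_of_le_sIn (inf_le_right : K' ≤ sIn F {j})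
        simpa using this
      have hsum : finrank F K = 0 ∨ finrank F K' = 0 := by
        by_contra h
        push_neg at h
        have hKne : K ≠ ⊥ := fun hb => h.1 (by rw [hb, finrank_bot])
        have hK'ne : K' ≠ ⊥ := fun hb => h.2 (by rw [hb, finrank_bot])
        obtain ⟨a, haK, hane⟩ := Submodule.exists_mem_ne_zero_of_ne_bot hKne
        obtain ⟨b, hbK, hbne⟩ := Submodule.exists_mem_ne_zero_of_ne_bot hK'ne
        have haj : a j ≠ 0 := by
          intro h0
          apply hane
          funext i
          by_cases hij : i = j
          · subst hij; exact h0
          · exact haK.2 i (by simp [hij])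
        have hbj : b j ≠ 0 := by
          intro h0
          apply hbne
          funext i
          by_cases hij : i = j
          · subst hij; exact h0
          · exact hbK.2 i (by simp [hij])
        have habD : a * b ∈ D := mul_mem_prodCode haK.1 hbK.1
        have h0 := hj _ habD
        simp only [Pi.mul_apply] at h0
        exact (mul_eq_zero.mp h0).elim haj hbj
      omega

end

theorem stmt0 {F : Type*} [Field F] [Fintype F] [DecidableEq F] {n k k' : ℕ}
    (C C' : Submodule F (Fin n → F))
    (hk : Module.finrank F C = k) (hk' : Module.finrank F C' = k')
    (hne : prodCode F C C' ≠ ⊥) :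
    (dmin (prodCode F C C') : ℤ) ≤ max 1 ((n : ℤ) - k - k' + 2) := by
  classical
  obtain ⟨z, hz, hzne, hzw⟩ :=
    main_induction n (Finset.univ : Finset (Fin n)) C C'
      (by simp)
      (fun x _ i hi => absurd (Finset.mem_univ i) hi)
      (fun x _ i hi => absurd (Finset.mem_univ i) hi)
      hne
  have h1 : dmin (prodCode F C C') ≤ hammingNorm z := Nat.sInf_le ⟨z, hz, hzne, rfl⟩
  have hcard : (((Finset.univ : Finset (Fin n)).card : ℤ)) = n := by simp
  rw [← hk, ← hk']
  calc ((dmin (prodCode F C C') : ℤ)) ≤ (hammingNorm z : ℤ) := by exact_mod_cast h1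
    _ ≤ _ := by rw [← hcard]; exact hzw

end
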